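/- Let H be a subgroup of G. The following are equivalent: (1) there exists a right idempotent state m on ℓ∞(G) with J¹(G,H) = Ann_L(m); (2) there exists a right idempotent state m on ℓ∞(G) with J¹(G,H) + ℂ·ε = Inv_L(m); (3) ℓ∞(G/H) is amenable. -/

import Mathlib

set_option linter.unusedSectionVars false

open scoped ENNReal ComplexOrder

noncomputable section

namespace QG

variable {G : Type*} [Group G]

/-- `ℓ∞(G)`: bounded complex functions on `G`. -/
abbrev Linf (G : Type*) : Type _ := lp (fun _ : G => ℂ) ∞

/-- `ℓ¹(G)`: summable complex functions on `G`. -/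
abbrev L1 (G : Type*) : Type _ := lp (fun _ : G => ℂ) 1

/-- The dual space `ℓ∞(G)*`. -/
abbrev DualLinf (G : Type*) : Type _ := StrongDual ℂ (Linf G)

lemma summable_norm (f : L1 G) : Summable fun s => ‖f s‖ := by
  have h := (lp.memℓp f).summable (by simp)
  simpa using h

lemma norm_apply_le (x : Linf G) (s : G) : ‖x s‖ ≤ ‖x‖ :=
  lp.norm_apply_le_norm ENNReal.top_ne_zero x s

/-- The constant function `1` in `ℓ∞(G)`. -/
def one' : Linf G :=
  ⟨fun _ => (1 : ℂ), memℓp_infty ⟨1, by rintro r ⟨t, rfl⟩; simp⟩⟩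

/-- Left translation: `(L_s x)(t) = x (s * t)`. -/
def Ltrans (s : G) (x : Linf G) : Linf G :=
  ⟨fun t => x (s * t),
    memℓp_infty (BddAbove.mono (by rintro r ⟨t, rfl⟩; exact ⟨s * t, rfl⟩) (lp.memℓp x).bddAbove)⟩

@[simp] lemma Ltrans_apply (s : G) (x : Linf G) (t : G) : Ltrans s x t = x (s * t) := rfl

lemma norm_Ltrans_le (s : G) (x : Linf G) : ‖Ltrans s x‖ ≤ ‖x‖ := by
  rw [lp.norm_eq_ciSup]
  exact ciSup_le fun t => norm_apply_le x (s * t)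

/-- The action `m * x` of `m ∈ ℓ∞(G)*` on `x ∈ ℓ∞(G)`: `(m*x)(s) = m (L_s x)`. -/
def starAct (m : DualLinf G) (x : Linf G) : Linf G :=
  ⟨fun s => m (Ltrans s x),
    memℓp_infty ⟨‖m‖ * ‖x‖, by
      rintro r ⟨s, rfl⟩
      calc ‖m (Ltrans s x)‖ ≤ ‖m‖ * ‖Ltrans s x‖ := m.le_opNorm _
        _ ≤ ‖m‖ * ‖x‖ :=
          mul_le_mul_of_nonneg_left (norm_Ltrans_le s x) (norm_nonneg m)⟩⟩

@[simp] lemma starAct_apply (m : DualLinf G) (x : Linf G) (s : G) :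
    starAct m x s = m (Ltrans s x) := rfl

lemma summable_mul_bound (f : L1 G) (x : Linf G) (t : G) :
    Summable fun s => ‖f s * x (s * t)‖ := by
  refine Summable.of_nonneg_of_le (fun s => norm_nonneg _) (fun s => ?_)
    ((summable_norm f).mul_right ‖x‖)
  rw [norm_mul]
  exact mul_le_mul_of_nonneg_left (norm_apply_le x (s * t)) (norm_nonneg _)

/-- The right action of `ℓ¹(G)` on `ℓ∞(G)`: `(x * f)(t) = ∑_s f s * x (s * t)`. -/
def rAct (x : Linf G) (f : L1 G) : Linf G :=
  ⟨fun t => ∑' s, f s * x (s * t),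
    memℓp_infty ⟨(∑' s, ‖f s‖) * ‖x‖, by
      rintro r ⟨t, rfl⟩
      calc ‖∑' s, f s * x (s * t)‖ ≤ ∑' s, ‖f s * x (s * t)‖ :=
            norm_tsum_le_tsum_norm (summable_mul_bound f x t)
        _ ≤ ∑' s, ‖f s‖ * ‖x‖ :=
            (summable_mul_bound f x t).tsum_le_tsum (fun s => by
                rw [norm_mul]
                exact mul_le_mul_of_nonneg_left (norm_apply_le x (s * t)) (norm_nonneg _))
              ((summable_norm f).mul_right _)
        _ = (∑' s, ‖f s‖) * ‖x‖ := tsum_mul_right⟩⟩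

@[simp] lemma rAct_apply (x : Linf G) (f : L1 G) (t : G) :
    rAct x f t = ∑' s, f s * x (s * t) := rfl

/-- The shear equivalence of `G × G`. -/
def shearEquiv (G : Type*) [Group G] : G × G ≃ G × G where
  toFun p := (p.2, p.2⁻¹ * p.1)
  invFun p := (p.1 * p.2, p.1)
  left_inv p := by simp
  right_inv p := by simp

lemma conv_prod_summable (f g : L1 G) :
    Summable fun p : G × G => ‖f p.2‖ * ‖g (p.2⁻¹ * p.1)‖ := by
  have h0 : Summable fun p : G × G => ‖f p.1‖ * ‖g p.2‖ :=
    (summable_norm f).mul_of_nonneg (summable_norm g) (fun _ => norm_nonneg _)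
      (fun _ => norm_nonneg _)
  have key : Summable ((fun p : G × G => ‖f p.1‖ * ‖g p.2‖) ∘ (shearEquiv G)) :=
    (shearEquiv G).summable_iff.mpr h0
  have heq : ((fun p : G × G => ‖f p.1‖ * ‖g p.2‖) ∘ (shearEquiv G)) =
      fun p : G × G => ‖f p.2‖ * ‖g (p.2⁻¹ * p.1)‖ := by
    funext p
    simp [shearEquiv, Function.comp]
  rwa [heq] at key

lemma conv_memℓp (f g : L1 G) : Memℓp (fun t : G => ∑' s, f s * g (s⁻¹ * t)) 1 := by
  have hp := conv_prod_summable f g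
  obtain ⟨h1, h2⟩ :=
    (summable_prod_of_nonneg (fun p => mul_nonneg (norm_nonneg _) (norm_nonneg _))).1 hp
  apply memℓp_gen
  simp only [ENNReal.toReal_one, Real.rpow_one]
  refine Summable.of_nonneg_of_le (fun t => norm_nonneg _) (fun t => ?_) h2
  calc ‖∑' s, f s * g (s⁻¹ * t)‖ ≤ ∑' s, ‖f s * g (s⁻¹ * t)‖ :=
        norm_tsum_le_tsum_norm (by simpa only [norm_mul] using h1 t)
    _ = ∑' s, ‖f s‖ * ‖g (s⁻¹ * t)‖ := tsum_congr fun s => norm_mul _ _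

/-- Convolution on `ℓ¹(G)`: `(f * g)(t) = ∑_s f s * g (s⁻¹ t)`. -/
def conv (f g : L1 G) : L1 G :=
  ⟨fun t => ∑' s, f s * g (s⁻¹ * t), conv_memℓp f g⟩

@[simp] lemma conv_apply (f g : L1 G) (t : G) : conv f g t = ∑' s, f s * g (s⁻¹ * t) := rfl

open Classical in
/-- The unit `ε = δ_e` of the convolution algebra `ℓ¹(G)`. -/
def eps : L1 G :=
  ⟨fun t => if t = 1 then 1 else 0, by
    apply memℓp_gen
    refine summable_of_ne_finset_zero (s := ({1} : Finset G)) ?_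
    intro t ht
    simp only [Finset.mem_singleton] at ht
    simp [ht]⟩

open Classical in
/-- Multiplication by the indicator function of `H`: `f · 1_H`. -/
def mulIndic (H : Subgroup G) (f : L1 G) : L1 G :=
  ⟨fun s => if s ∈ H then f s else 0, by
    apply memℓp_gen
    simp only [ENNReal.toReal_one, Real.rpow_one]
    refine Summable.of_nonneg_of_le (fun s => norm_nonneg _) (fun s => ?_) (summable_norm f)
    by_cases h : s ∈ H <;> simp [h]⟩

open Classical in
/-- The indicator function `1_H ∈ ℓ∞(G)` of a subgroup `H`. -/
def indic (H : Subgroup G) : Linf G :=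
  ⟨fun s => if s ∈ H then 1 else 0,
    memℓp_infty ⟨1, by rintro r ⟨s, rfl⟩; by_cases h : s ∈ H <;> simp [h]⟩⟩

/-- A state on `ℓ∞(G)`: unital positive functional. -/
def IsState (m : DualLinf G) : Prop :=
  m one' = 1 ∧ ∀ x : Linf G, (∀ s, 0 ≤ x s) → 0 ≤ m x

/-- `f ∈ Ann_L(m)`, i.e. `f * m = 0`. -/
def memAnnL (m : DualLinf G) (f : L1 G) : Prop :=
  ∀ x : Linf G, ∑' s, f s * m (Ltrans s x) = 0

/-- `f ∈ Inv_L(m, x₀)`, i.e. `f * m = f(x₀) · m`. -/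
def memInvLx (m : DualLinf G) (x₀ : Linf G) (f : L1 G) : Prop :=
  ∀ x : Linf G, ∑' s, f s * m (Ltrans s x) = (∑' s, f s * x₀ s) * m x

/-- `f ∈ Inv_L(m)`, i.e. `f * m = f(1) · m`. -/
def memInvL (m : DualLinf G) (f : L1 G) : Prop :=
  ∀ x : Linf G, ∑' s, f s * m (Ltrans s x) = (∑' s, f s) * m x

/-- A right idempotent state: a state with `m (m * x) = m x` for all `x`. -/
def IsRightIdempotentState (m : DualLinf G) : Prop :=
  IsState m ∧ ∀ x : Linf G, m (starAct m x) = m x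

/-- A character of `G` in `ℓ∞(G)`. -/
def IsCharacter (x : Linf G) : Prop :=
  (∀ s t : G, x (s * t) = x s * x t) ∧ ∀ s : G, ‖x s‖ = 1

/-- `ℓ∞(G/H)`, the right-`H`-invariant elements of `ℓ∞(G)`. -/
def LinfQuot (H : Subgroup G) : Set (Linf G) :=
  {x | ∀ s : G, ∀ h ∈ H, x (s * h) = x s}

/-- `J¹(G,H)`, the preannihilator of `ℓ∞(G/H)` in `ℓ¹(G)`. -/
def J1 (H : Subgroup G) : Set (L1 G) :=
  {f | ∀ x ∈ LinfQuot H, ∑' s, f s * x s = 0}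

/-- `E` witnesses relative amenability of `ℓ∞(G/H)`: a unital positive
`ℓ¹(G)`-module map `ℓ∞(G) → ℓ∞(G)` with range inside `ℓ∞(G/H)`. -/
def IsRelAmenMap (H : Subgroup G) (E : Linf G →ₗ[ℂ] Linf G) : Prop :=
  E one' = one' ∧
  (∀ x : Linf G, (∀ s, 0 ≤ x s) → ∀ s, 0 ≤ E x s) ∧
  (∀ x : Linf G, E x ∈ LinfQuot H) ∧
  (∀ (x : Linf G) (f : L1 G), E (rAct x f) = rAct (E x) f)

/-- `ℓ∞(G/H)` is relatively amenable. -/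
def RelAmen (H : Subgroup G) : Prop :=
  ∃ E : Linf G →ₗ[ℂ] Linf G, IsRelAmenMap H E

/-- `ℓ∞(G/H)` is amenable. -/
def Amen (H : Subgroup G) : Prop :=
  ∃ E : Linf G →ₗ[ℂ] Linf G, IsRelAmenMap H E ∧ ∀ x ∈ LinfQuot H, E x = x

/-- Amenability of a discrete group: existence of a left invariant mean. -/
def GroupAmenable (K : Type*) [Group K] : Prop :=
  ∃ μ : DualLinf K, IsState μ ∧ ∀ (k : K) (y : Linf K), μ (Ltrans k y) = μ y

/-- `H`-invariance of a functional on `ℓ∞(G)`. -/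
def HInvariant (H : Subgroup G) (μ : DualLinf G) : Prop :=
  ∀ h ∈ H, ∀ x : Linf G, μ (Ltrans h x) = μ x

/-- `J` has a bounded right approximate identity contained in `S`. -/
def HasBraiIn (J S : Set (L1 G)) : Prop :=
  ∃ (ι : Type) (l : Filter ι) (e : ι → L1 G), l.NeBot ∧
    (∃ C : ℝ, ∀ i, ‖e i‖ ≤ C) ∧ (∀ i, e i ∈ S) ∧
    ∀ f ∈ J, Filter.Tendsto (fun i => ‖conv f (e i) - f‖) l (nhds 0)

lemma one'_mem_LinfQuot (H : Subgroup G) : (one' : Linf G) ∈ LinfQuot H :=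
  fun _ _ _ => rfl

lemma Ltrans_mem_LinfQuot {H : Subgroup G} {x : Linf G} (hx : x ∈ LinfQuot H) (s : G) :
    Ltrans s x ∈ LinfQuot H := by
  intro t h hh
  show x (s * (t * h)) = x (s * t)
  rw [← mul_assoc]
  exact hx (s * t) h hh

/-- `ℓ∞(G/H)` as a subspace of `ℓ∞(G)`. -/
def LinfQuotSub (H : Subgroup G) : Submodule ℂ (Linf G) where
  carrier := LinfQuot H
  add_mem' := by
    intro a b ha hb s h hh
    show (a + b : Linf G) (s * h) = (a + b : Linf G) s
    rw [lp.coeFn_add]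
    simp only [Pi.add_apply]
    rw [ha s h hh, hb s h hh]
  zero_mem' := by
    intro s h hh
    show (0 : Linf G) (s * h) = (0 : Linf G) s
    rw [lp.coeFn_zero]
    simp
  smul_mem' := by
    intro c a ha s h hh
    show (c • a : Linf G) (s * h) = (c • a : Linf G) s
    rw [lp.coeFn_smul]
    simp only [Pi.smul_apply]
    rw [ha s h hh]

/-- The weak* topology on `ℓ∞(G) = ℓ¹(G)*`: the topology induced by the
pairings against elements of `ℓ¹(G)`. -/
def weakStarTop (G : Type*) [Group G] : TopologicalSpace (Linf G) :=
  TopologicalSpace.induced (fun (y : Linf G) => fun f : L1 G => ∑' s, f s * y s)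
    Pi.topologicalSpace


section Helpers

@[simp] lemma one'_apply (s : G) : (one' : Linf G) s = 1 := rfl

lemma linf_ext {x y : Linf G} (h : ∀ s, x s = y s) : x = y :=
  lp.ext (funext h)

lemma l1_ext {x y : L1 G} (h : ∀ s, x s = y s) : x = y :=
  lp.ext (funext h)

lemma linf_add_apply (a b : Linf G) (g : G) : (a + b) g = a g + b g := by
  simpa using congrFun (lp.coeFn_add a b) g

lemma linf_smul_apply (c : ℂ) (a : Linf G) (g : G) : (c • a) g = c * a g := by
  simpa using congrFun (lp.coeFn_smul c a) g

lemma l1_add_apply (a b : L1 G) (g : G) : (a + b) g = a g + b g := by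
  simpa using congrFun (lp.coeFn_add a b) g

lemma l1_smul_apply (c : ℂ) (a : L1 G) (g : G) : (c • a) g = c * a g := by
  simpa using congrFun (lp.coeFn_smul c a) g

lemma l1_sub_apply (a b : L1 G) (g : G) : (a - b) g = a g - b g := by
  simpa using congrFun (lp.coeFn_sub a b) g

lemma linf_norm_le {x : Linf G} {C : ℝ} (h : ∀ g, ‖x g‖ ≤ C) : ‖x‖ ≤ C := by
  haveI : Nonempty G := ⟨1⟩
  rw [lp.norm_eq_ciSup]; exact ciSup_le h

open Classical in
/-- Dirac function in `ℓ¹(G)`. -/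
def dirac (a : G) : L1 G :=
  ⟨fun t => if t = a then 1 else 0, by
    apply memℓp_gen
    refine summable_of_ne_finset_zero (s := ({a} : Finset G)) ?_
    intro t ht
    simp only [Finset.mem_singleton] at ht
    simp [ht]⟩

open Classical in
lemma dirac_apply (a t : G) : dirac a t = if t = a then 1 else 0 := rfl

lemma tsum_dirac_mul (a : G) (φ : G → ℂ) : ∑' s, dirac a s * φ s = φ a := by
  classical
  rw [tsum_eq_single a (fun b hb => by simp [dirac_apply, hb])]
  simp [dirac_apply]

lemma rAct_dirac (x : Linf G) (a : G) : rAct x (dirac a) = Ltrans a x := by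
  refine linf_ext fun t => ?_
  show ∑' s, dirac a s * x (s * t) = x (a * t)
  exact tsum_dirac_mul a (fun s => x (s * t))

lemma Ltrans_one (x : Linf G) : Ltrans 1 x = x :=
  linf_ext fun t => by rw [Ltrans_apply, one_mul]

lemma Ltrans_one' (s : G) : Ltrans s (one' : Linf G) = one' :=
  linf_ext fun _ => rfl

/-- Evaluation at a point, as a continuous linear functional on `ℓ∞(G)`. -/
def evCLM (g : G) : Linf G →L[ℂ] ℂ :=
  LinearMap.mkContinuous
    { toFun := fun x => x g
      map_add' := fun a b => linf_add_apply a b g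
      map_smul' := fun c a => linf_smul_apply c a g }
    1 (fun x => by rw [one_mul]; exact norm_apply_le x g)

@[simp] lemma evCLM_apply (g : G) (x : Linf G) : evCLM g x = x g := rfl

lemma summable_mul_of_bounded (f : L1 G) {φ : G → ℂ} {C : ℝ} (hφ : ∀ s, ‖φ s‖ ≤ C) :
    Summable fun s => f s * φ s :=
  Summable.of_norm_bounded ((summable_norm f).mul_right C)
    (fun s => by rw [norm_mul]; exact mul_le_mul_of_nonneg_left (hφ s) (norm_nonneg _))

open Classical in
lemma tsum_eps_mul (φ : G → ℂ) : ∑' s, (eps : L1 G) s * φ s = φ 1 := by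
  have : ∀ s : G, (eps : L1 G) s = if s = 1 then 1 else 0 := fun s => rfl
  rw [tsum_eq_single 1 (fun b hb => by rw [this]; simp [hb])]
  rw [this]; simp

lemma tsum_eps : ∑' s, (eps : L1 G) s = 1 := by
  have := tsum_eps_mul (G := G) (fun _ => (1 : ℂ))
  simpa using this

end Helpers

section Positivity

lemma norm_of_im_zero {z : ℂ} (hz : z.im = 0) : ‖z‖ = |z.re| := by
  have : z = ((z.re : ℝ) : ℂ) := Complex.ext rfl (by simp [hz])
  rw [this]
  simp

/-- Real part of an element of `ℓ∞(G)`. -/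
def rePart (x : Linf G) : Linf G :=
  ⟨fun g => ((x g).re : ℂ), memℓp_infty ⟨‖x‖, by
    rintro r ⟨g, rfl⟩
    calc ‖((x g).re : ℂ)‖ = |(x g).re| := by simp
      _ ≤ ‖x g‖ := Complex.abs_re_le_norm _
      _ ≤ ‖x‖ := norm_apply_le x g⟩⟩

/-- Imaginary part of an element of `ℓ∞(G)`. -/
def imPart (x : Linf G) : Linf G :=
  ⟨fun g => ((x g).im : ℂ), memℓp_infty ⟨‖x‖, by
    rintro r ⟨g, rfl⟩
    calc ‖((x g).im : ℂ)‖ = |(x g).im| := by simp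
      _ ≤ ‖x g‖ := Complex.abs_im_le_norm _
      _ ≤ ‖x‖ := norm_apply_le x g⟩⟩

@[simp] lemma rePart_apply (x : Linf G) (g : G) : rePart x g = ((x g).re : ℂ) := rfl
@[simp] lemma imPart_apply (x : Linf G) (g : G) : imPart x g = ((x g).im : ℂ) := rfl

lemma norm_rePart_le (x : Linf G) : ‖rePart x‖ ≤ ‖x‖ :=
  linf_norm_le fun g => by
    calc ‖((x g).re : ℂ)‖ = |(x g).re| := by simp
      _ ≤ ‖x g‖ := Complex.abs_re_le_norm _
      _ ≤ ‖x‖ := norm_apply_le x g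

lemma norm_imPart_le (x : Linf G) : ‖imPart x‖ ≤ ‖x‖ :=
  linf_norm_le fun g => by
    calc ‖((x g).im : ℂ)‖ = |(x g).im| := by simp
      _ ≤ ‖x g‖ := Complex.abs_im_le_norm _
      _ ≤ ‖x‖ := norm_apply_le x g

lemma re_add_I_smul_im (x : Linf G) : rePart x + Complex.I • imPart x = x := by
  refine linf_ext fun g => ?_
  rw [linf_add_apply, linf_smul_apply, rePart_apply, imPart_apply, mul_comm]
  exact Complex.re_add_im (x g)

set_option maxHeartbeats 1000000 in
set_option synthInstance.maxHeartbeats 200000 in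
lemma real_bound (l : Linf G →ₗ[ℂ] ℂ) (h1 : l one' = 1)
    (hpos : ∀ x : Linf G, (∀ s, 0 ≤ x s) → 0 ≤ l x)
    (u : Linf G) (hu : ∀ g, (u g).im = 0) : (l u).im = 0 ∧ |(l u).re| ≤ ‖u‖ := by
  have habs : ∀ g, |(u g).re| ≤ ‖u‖ := fun g => by
    have h := norm_apply_le u g
    exact le_trans (Complex.abs_re_le_norm _) h
  have hp : 0 ≤ l ((‖u‖ : ℂ) • one' + u) := by
    refine hpos _ fun s => ?_
    rw [linf_add_apply, linf_smul_apply, one'_apply, mul_one, Complex.le_def]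
    constructor
    · have := habs s
      simp only [Complex.zero_re, Complex.add_re, Complex.ofReal_re]
      have := abs_le.1 (habs s)
      linarith [this.1]
    · simp [hu s]
  have hq : 0 ≤ l ((‖u‖ : ℂ) • one' - u) := by
    refine hpos _ fun s => ?_
    have hsub := congrFun (lp.coeFn_sub ((‖u‖ : ℂ) • one') u) s
    rw [hsub, Pi.sub_apply, linf_smul_apply, one'_apply, mul_one, Complex.le_def]
    constructor
    · simp only [Complex.zero_re, Complex.sub_re, Complex.ofReal_re]
      have := abs_le.1 (habs s)
      linarith [this.2]
    · simp [hu s]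
  rw [map_add, map_smul, h1, smul_eq_mul, mul_one] at hp
  rw [map_sub, map_smul, h1, smul_eq_mul, mul_one] at hq
  rw [Complex.le_def] at hp hq
  simp only [Complex.zero_re, Complex.zero_im, Complex.add_re, Complex.add_im,
    Complex.sub_re, Complex.sub_im, Complex.ofReal_re, Complex.ofReal_im] at hp hq
  constructor
  · linarith [hp.2, hq.2]
  · rw [abs_le]
    constructor <;> linarith [hp.1, hq.1]

lemma bound_of_pos (l : Linf G →ₗ[ℂ] ℂ) (h1 : l one' = 1)
    (hpos : ∀ x : Linf G, (∀ s, 0 ≤ x s) → 0 ≤ l x) (x : Linf G) :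
    ‖l x‖ ≤ 2 * ‖x‖ := by
  obtain ⟨hre_im, hre⟩ := real_bound l h1 hpos (rePart x) (fun g => by simp)
  obtain ⟨him_im, him⟩ := real_bound l h1 hpos (imPart x) (fun g => by simp)
  have hx : l x = l (rePart x) + Complex.I * l (imPart x) := by
    conv_lhs => rw [← re_add_I_smul_im x]
    rw [map_add, map_smul, smul_eq_mul]
  rw [hx]
  calc ‖l (rePart x) + Complex.I * l (imPart x)‖
      ≤ ‖l (rePart x)‖ + ‖Complex.I * l (imPart x)‖ := norm_add_le _ _
    _ = |(l (rePart x)).re| + |(l (imPart x)).re| := by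
        rw [norm_mul, Complex.norm_I, one_mul, norm_of_im_zero hre_im, norm_of_im_zero him_im]
    _ ≤ ‖rePart x‖ + ‖imPart x‖ := add_le_add hre him
    _ ≤ ‖x‖ + ‖x‖ := add_le_add (norm_rePart_le x) (norm_imPart_le x)
    _ = 2 * ‖x‖ := by ring

end Positivity

section Transversal

variable (H : Subgroup G)

/-- A representative of the right coset `Hg`. -/
def tv (g : G) : G := (Quotient.mk (QuotientGroup.rightRel H) g).out

/-- The `H`-part of `g` relative to the transversal: `g = rp g * tv g` with `rp g ∈ H`. -/
def rp (g : G) : G := g * (tv H g)⁻¹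

lemma rp_mem (g : G) : rp H g ∈ H := by
  have h := Quotient.mk_out (s := QuotientGroup.rightRel H) g
  rw [QuotientGroup.rightRel_apply] at h
  exact h

lemma tv_smul {h : G} (hh : h ∈ H) (g : G) : tv H (h * g) = tv H g := by
  unfold tv
  congr 1
  apply Quotient.sound
  show (QuotientGroup.rightRel H) (h * g) g
  rw [QuotientGroup.rightRel_apply]
  have : g * (h * g)⁻¹ = h⁻¹ := by group
  rw [this]
  exact inv_mem hh

lemma rp_smul {h : G} (hh : h ∈ H) (g : G) : rp H (h * g) = h * rp H g := by
  unfold rp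
  rw [tv_smul H hh g, mul_assoc]

variable {H}

/-- `(Ψ_s x)(g) = x (s * rp(g))`. -/
def psi (H : Subgroup G) (s : G) (x : Linf G) : Linf G :=
  ⟨fun g => x (s * rp H g),
    memℓp_infty ⟨‖x‖, by rintro r ⟨g, rfl⟩; exact norm_apply_le x _⟩⟩

@[simp] lemma psi_apply (s : G) (x : Linf G) (g : G) : psi H s x g = x (s * rp H g) := rfl

lemma norm_psi_le (s : G) (x : Linf G) : ‖psi H s x‖ ≤ ‖x‖ :=
  linf_norm_le fun g => norm_apply_le x _

lemma psi_add (s : G) (x y : Linf G) : psi H s (x + y) = psi H s x + psi H s y :=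
  linf_ext fun g => by
    rw [linf_add_apply, psi_apply, psi_apply, psi_apply, linf_add_apply]

lemma psi_smul (s : G) (c : ℂ) (x : Linf G) : psi H s (c • x) = c • psi H s x :=
  linf_ext fun g => by
    rw [linf_smul_apply, psi_apply, psi_apply, linf_smul_apply]

lemma psi_mul_mem {h : G} (hh : h ∈ H) (s : G) (x : Linf G) :
    psi H (s * h) x = Ltrans h (psi H s x) :=
  linf_ext fun g => by
    rw [Ltrans_apply, psi_apply, psi_apply, rp_smul H hh g, mul_assoc]

/-- The expectation built from an `H`-invariant state. -/
def Emap (H : Subgroup G) (μ : DualLinf G) : Linf G →ₗ[ℂ] Linf G where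
  toFun x :=
    ⟨fun s => μ (psi H s x),
      memℓp_infty ⟨‖μ‖ * ‖x‖, by
        rintro r ⟨s, rfl⟩
        calc ‖μ (psi H s x)‖ ≤ ‖μ‖ * ‖psi H s x‖ := μ.le_opNorm _
          _ ≤ ‖μ‖ * ‖x‖ :=
            mul_le_mul_of_nonneg_left (norm_psi_le s x) (norm_nonneg μ)⟩⟩
  map_add' x y := by
    refine linf_ext fun s => ?_
    rw [linf_add_apply]
    show μ (psi H s (x + y)) = μ (psi H s x) + μ (psi H s y)
    rw [psi_add, map_add]
  map_smul' c x := by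
    refine linf_ext fun s => ?_
    show μ (psi H s (c • x)) = (c • ((⟨fun s => μ (psi H s x), _⟩ : Linf G))) s
    rw [linf_smul_apply]
    show μ (psi H s (c • x)) = c * μ (psi H s x)
    rw [psi_smul, map_smul, smul_eq_mul]

@[simp] lemma Emap_apply (μ : DualLinf G) (x : Linf G) (s : G) :
    Emap H μ x s = μ (psi H s x) := rfl

lemma hinv_to_amen {μ : DualLinf G} (hμ : IsState μ) (hinv : HInvariant H μ) : Amen H := by
  refine ⟨Emap H μ, ⟨?_, ?_, ?_, ?_⟩, ?_⟩
  · -- unital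
    refine linf_ext fun s => ?_
    rw [Emap_apply, one'_apply]
    have : psi H s one' = one' := linf_ext fun g => rfl
    rw [this, hμ.1]
  · -- positive
    intro x hx s
    rw [Emap_apply]
    exact hμ.2 _ (fun g => hx _)
  · -- range
    intro x s h hh
    rw [Emap_apply, Emap_apply, psi_mul_mem hh, hinv h hh]
  · -- module map
    intro x f
    have hsum : ∀ s : G, Summable fun u => f u • psi H (u * s) x := fun s =>
      Summable.of_norm_bounded ((summable_norm f).mul_right _)
        (fun u => by
          rw [norm_smul]
          exact mul_le_mul_of_nonneg_left (norm_psi_le _ x) (norm_nonneg _))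
    have key : ∀ s : G, psi H s (rAct x f) = ∑' u, f u • psi H (u * s) x := by
      intro s
      refine linf_ext fun g => ?_
      have h2 : (∑' u, f u • psi H (u * s) x) g = ∑' u, f u * x (u * s * rp H g) := by
        have h3 := (evCLM g).map_tsum (hsum s)
        rw [evCLM_apply] at h3
        rw [h3]
        refine tsum_congr fun u => ?_
        rw [map_smul, smul_eq_mul, evCLM_apply, psi_apply]
      rw [h2, psi_apply, rAct_apply]
      exact tsum_congr fun u => by rw [mul_assoc]
    refine linf_ext fun s => ?_
    rw [Emap_apply, key s, μ.map_tsum (hsum s), rAct_apply]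
    refine tsum_congr fun u => ?_
    rw [map_smul, smul_eq_mul, Emap_apply]
  · -- fixes LinfQuot
    intro x hx
    refine linf_ext fun s => ?_
    rw [Emap_apply]
    have : psi H s x = x s • one' := linf_ext fun g => by
      rw [psi_apply, linf_smul_apply, one'_apply, mul_one, hx s _ (rp_mem H g)]
    rw [this, map_smul, hμ.1, smul_eq_mul, mul_one]

end Transversal

section Implications

variable {H : Subgroup G}

lemma state_bound (m : DualLinf G) (x : Linf G) (s : G) :
    ‖m (Ltrans s x)‖ ≤ ‖m‖ * ‖x‖ :=
  calc ‖m (Ltrans s x)‖ ≤ ‖m‖ * ‖Ltrans s x‖ := m.le_opNorm _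
    _ ≤ ‖m‖ * ‖x‖ := mul_le_mul_of_nonneg_left (norm_Ltrans_le s x) (norm_nonneg m)

lemma tsum_dirac_sub_mul {a b : G} (hab : a ≠ b) (φ : G → ℂ) :
    ∑' s, (dirac a - dirac b : L1 G) s * φ s = φ a - φ b := by
  classical
  have hcoe : ∀ s, (dirac a - dirac b : L1 G) s = dirac a s - dirac b s := fun s =>
    l1_sub_apply _ _ s
  rw [tsum_eq_sum (s := ({a, b} : Finset G)) ?_]
  · rw [Finset.sum_pair hab, hcoe, hcoe, dirac_apply, dirac_apply, dirac_apply, dirac_apply]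
    simp only [if_pos rfl, if_neg hab, if_neg (Ne.symm hab), if_true, eq_self_iff_true]
    ring
  · intro t ht
    simp only [Finset.mem_insert, Finset.mem_singleton, not_or] at ht
    rw [hcoe, dirac_apply, dirac_apply]
    simp [ht.1, ht.2]

/-- Statement (1) gives `H`-invariance of the state. -/
lemma one_to_hinv {m : DualLinf G}
    (hJ : J1 H = {f : L1 G | memAnnL m f}) : HInvariant H m := by
  intro h hh x
  by_cases he : h = 1
  · rw [he, Ltrans_one]
  · have hf : (dirac h - dirac 1 : L1 G) ∈ J1 H := by
      intro y hy
      rw [tsum_dirac_sub_mul he]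
      have h1 := hy 1 h hh
      rw [one_mul] at h1
      rw [h1, sub_self]
    rw [hJ] at hf
    have h0 := hf x
    rw [tsum_dirac_sub_mul he, Ltrans_one] at h0
    exact sub_eq_zero.1 h0

/-- Amenability gives statement (1). -/
lemma amen_to_one (hA : Amen H) :
    ∃ m : DualLinf G, IsRightIdempotentState m ∧ J1 H = {f : L1 G | memAnnL m f} := by
  obtain ⟨E, ⟨hone, hpos, hrange, hmod⟩, hfix⟩ := hA
  set l : Linf G →ₗ[ℂ] ℂ :=
    { toFun := fun x => E x 1
      map_add' := fun a b => by
        show E (a + b) 1 = E a 1 + E b 1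
        rw [E.map_add]; exact linf_add_apply _ _ 1
      map_smul' := fun c a => by
        show E (c • a) 1 = c • (E a 1)
        rw [E.map_smul]; exact linf_smul_apply c _ 1 } with hl
  have hl1 : l one' = 1 := by
    show E one' 1 = 1
    rw [hone, one'_apply]
  have hlpos : ∀ x : Linf G, (∀ s, 0 ≤ x s) → 0 ≤ l x := fun x hx => hpos x hx 1
  set m : DualLinf G := LinearMap.mkContinuous l 2 (bound_of_pos l hl1 hlpos) with hm
  have hmx : ∀ x : Linf G, m x = E x 1 := fun x => rfl
  have hcomm : ∀ (s : G) (x : Linf G), E (Ltrans s x) = Ltrans s (E x) := fun s x => by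
    rw [← rAct_dirac x s, hmod, rAct_dirac]
  have hEx : ∀ (x : Linf G) (s : G), m (Ltrans s x) = E x s := fun x s => by
    rw [hmx, hcomm, Ltrans_apply, mul_one]
  have hstar : ∀ x : Linf G, starAct m x = E x := fun x =>
    linf_ext fun s => by rw [starAct_apply, hEx]
  refine ⟨m, ⟨⟨hl1, hlpos⟩, ?_⟩, ?_⟩
  · intro x
    rw [hstar, hmx, hmx, hfix (E x) (hrange x)]
  · ext f
    constructor
    · intro hf x
      have h1 : ∀ s, f s * m (Ltrans s x) = f s * E x s := fun s => by rw [hEx]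
      rw [tsum_congr h1]
      exact hf (E x) (hrange x)
    · intro hf y hy
      have h1 : ∀ s, f s * y s = f s * m (Ltrans s y) := fun s => by
        rw [hEx, hfix y hy]
      rw [tsum_congr h1]
      exact hf y

lemma tsum_pair_add (g : L1 G) (c : ℂ) {φ : G → ℂ} {C : ℝ} (hφ : ∀ s, ‖φ s‖ ≤ C) :
    ∑' s, ((g + c • eps : L1 G) s) * φ s = (∑' s, g s * φ s) + c * φ 1 := by
  have hcoe : ∀ s, (g + c • eps : L1 G) s = g s + c * eps s := fun s => by
    rw [l1_add_apply, l1_smul_apply]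
  calc ∑' s, ((g + c • eps : L1 G) s) * φ s
      = ∑' s, (g s * φ s + c * (eps s * φ s)) := tsum_congr fun s => by rw [hcoe]; ring
    _ = (∑' s, g s * φ s) + ∑' s, c * (eps s * φ s) :=
        Summable.tsum_add (summable_mul_of_bounded g hφ)
          ((summable_mul_of_bounded eps hφ).mul_left c)
    _ = (∑' s, g s * φ s) + c * ∑' s, eps s * φ s := by rw [tsum_mul_left]
    _ = (∑' s, g s * φ s) + c * φ 1 := by rw [tsum_eps_mul]

lemma tsum_pair_sub (g : L1 G) (c : ℂ) {φ : G → ℂ} {C : ℝ} (hφ : ∀ s, ‖φ s‖ ≤ C) :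
    ∑' s, ((g - c • eps : L1 G) s) * φ s = (∑' s, g s * φ s) - c * φ 1 := by
  have hcoe : ∀ s, (g - c • eps : L1 G) s = g s - c * eps s := fun s => by
    rw [l1_sub_apply, l1_smul_apply]
  calc ∑' s, ((g - c • eps : L1 G) s) * φ s
      = ∑' s, (g s * φ s - c * (eps s * φ s)) := tsum_congr fun s => by rw [hcoe]; ring
    _ = (∑' s, g s * φ s) - ∑' s, c * (eps s * φ s) :=
        Summable.tsum_sub (summable_mul_of_bounded g hφ)
          ((summable_mul_of_bounded eps hφ).mul_left c)
    _ = (∑' s, g s * φ s) - c * ∑' s, eps s * φ s := by rw [tsum_mul_left]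
    _ = (∑' s, g s * φ s) - c * φ 1 := by rw [tsum_eps_mul]

lemma tsum_pair_total (g : L1 G) (c : ℂ) :
    ∑' s, (g + c • eps : L1 G) s = (∑' s, g s) + c := by
  have h := tsum_pair_add (G := G) g c (φ := fun _ => (1 : ℂ)) (C := 1) (fun s => by simp)
  simpa using h

lemma J1_total_zero {g : L1 G} (hg : g ∈ J1 H) : ∑' s, g s = 0 := by
  have h := hg one' (one'_mem_LinfQuot H)
  simpa using h

/-- Statement (1) implies statement (2), with the same `m`. -/
lemma one_to_two {m : DualLinf G} (hst : IsState m)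
    (hJ : J1 H = {f : L1 G | memAnnL m f}) :
    {f : L1 G | ∃ g ∈ J1 H, ∃ c : ℂ, f = g + c • eps} = {f : L1 G | memInvL m f} := by
  ext f
  constructor
  · rintro ⟨g, hg, c, rfl⟩
    intro x
    have hgann : memAnnL m g := by rw [hJ] at hg; exact hg
    rw [tsum_pair_add g c (state_bound m x), hgann x, zero_add, tsum_pair_total,
      J1_total_zero hg, zero_add, Ltrans_one]
  · intro hf
    have hgann : memAnnL m (f - (∑' s, f s) • eps) := by
      intro x
      rw [tsum_pair_sub f (∑' s, f s) (state_bound m x), hf x, Ltrans_one, sub_self]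
    have hgJ : (f - (∑' s, f s) • eps) ∈ J1 H := by rw [hJ]; exact hgann
    exact ⟨_, hgJ, ∑' s, f s, by abel⟩

/-- Statement (2) implies statement (1), with the same `m`. -/
lemma two_to_one {m : DualLinf G} (hst : IsState m)
    (hI : {f : L1 G | ∃ g ∈ J1 H, ∃ c : ℂ, f = g + c • eps} = {f : L1 G | memInvL m f}) :
    J1 H = {f : L1 G | memAnnL m f} := by
  ext f
  constructor
  · intro hf x
    have hmem : f ∈ {f : L1 G | memInvL m f} := by
      rw [← hI]
      exact ⟨f, hf, 0, by simp⟩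
    rw [hmem x, J1_total_zero hf, zero_mul]
  · intro hf
    have htot : ∑' s, f s = 0 := by
      have h0 := hf one'
      have h1 : ∀ s, f s * m (Ltrans s one') = f s * 1 := fun s => by
        rw [Ltrans_one', hst.1]
      rw [tsum_congr h1] at h0
      simpa using h0
    have hinv : memInvL m f := fun x => by rw [hf x, htot, zero_mul]
    have hmem : f ∈ {f : L1 G | ∃ g ∈ J1 H, ∃ c : ℂ, f = g + c • eps} := by
      rw [hI]
      exact hinv
    obtain ⟨g, hg, c, rfl⟩ := hmem
    have hc : c = 0 := by
      rw [tsum_pair_total, J1_total_zero hg, zero_add] at htot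
      exact htot
    rw [hc, zero_smul, add_zero]
    exact hg


end Implications

/-- characterizations of amenability of `ℓ∞(G/H)`. -/
theorem statement6 (H : Subgroup G) :
    [(∃ m : DualLinf G, IsRightIdempotentState m ∧ J1 H = {f : L1 G | memAnnL m f}),
     (∃ m : DualLinf G, IsRightIdempotentState m ∧
        {f : L1 G | ∃ g ∈ J1 H, ∃ c : ℂ, f = g + c • eps} = {f : L1 G | memInvL m f}),
     Amen H].TFAE := by
  tfae_have 1 → 3 := by
    rintro ⟨m, ⟨hst, _⟩, hJ⟩
    exact hinv_to_amen hst (one_to_hinv hJ)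
  tfae_have 3 → 1 := fun h => amen_to_one h
  tfae_have 1 → 2 := by
    rintro ⟨m, hm, hJ⟩
    exact ⟨m, hm, one_to_two hm.1 hJ⟩
  tfae_have 2 → 1 := by
    rintro ⟨m, hm, hI⟩
    exact ⟨m, hm, two_to_one hm.1 hI⟩
  tfae_finish

end QG
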